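/- Let ω be a fixed angle with 0 < ω < π. Let q = (s,t) ∈ ℝ² with t > 0. Let b = (b₁, 0), c = (c₁, 0), b' = (b₁', 0), c' = (c₁', 0) be points on the x-axis with b₁ < c₁ and b₁' < c₁', such that ∠(b, q, c) = ω, ∠(b', q, c') = ω, and ‖q − b‖ = ‖q − c‖. Then c₁ − b₁ ≤ c₁' − b₁'; consequently the area (1/2)(c₁ − b₁)·t of triangle qbc is at most the area (1/2)(c₁' − b₁')·t of triangle qb'c', i.e., among all triangles with vertex q, angle ω at q, and opposite side on the x-axis, the isosceles one has minimum area. -/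

import Mathlib

open Real EuclideanGeometry
open scoped RealInnerProductSpace

/-- The point of the Euclidean plane with coordinates `x` and `y`. -/
def pt (x y : ℝ) : EuclideanSpace ℝ (Fin 2) := !₂[x, y]

lemma angle_eq_abs_arctan_sub (s t x y : ℝ) (ht : 0 < t) :
    EuclideanGeometry.angle (pt x 0) (pt s t) (pt y 0) =
      |arctan ((y-s)/t) - arctan ((x-s)/t)| := by
  have key : EuclideanGeometry.angle (pt x 0) (pt s t) (pt y 0) =
      Real.arccos (((x-s)*(y-s)+t^2) /
        (Real.sqrt ((x-s)^2+t^2) * Real.sqrt ((y-s)^2+t^2))) := by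
    rw [EuclideanGeometry.angle, InnerProductGeometry.angle]
    congr 1
    have h1 : ⟪pt x 0 -ᵥ pt s t, pt y 0 -ᵥ pt s t⟫ = (x-s)*(y-s)+t^2 := by
      simp [pt, PiLp.inner_apply, Fin.sum_univ_two]
      ring
    have h2 : ‖pt x 0 -ᵥ pt s t‖ = Real.sqrt ((x-s)^2+t^2) := by
      rw [show (pt x 0 -ᵥ pt s t) = pt x 0 - pt s t from rfl, EuclideanSpace.norm_eq]
      simp [pt, Fin.sum_univ_two]
    have h3 : ‖pt y 0 -ᵥ pt s t‖ = Real.sqrt ((y-s)^2+t^2) := by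
      rw [show (pt y 0 -ᵥ pt s t) = pt y 0 - pt s t from rfl, EuclideanSpace.norm_eq]
      simp [pt, Fin.sum_univ_two]
    rw [h1, h2, h3]
  have hcos : ((x-s)*(y-s)+t^2) /
      (Real.sqrt ((x-s)^2+t^2) * Real.sqrt ((y-s)^2+t^2)) =
      Real.cos (arctan ((y-s)/t) - arctan ((x-s)/t)) := by
    have hx : Real.sqrt ((x-s)^2+t^2) = t * Real.sqrt (1 + ((x-s)/t)^2) := by
      rw [← Real.sqrt_sq ht.le, ← Real.sqrt_mul (sq_nonneg t)]
      congr 1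
      rw [Real.sqrt_sq ht.le]
      field_simp
      ring
    have hy : Real.sqrt ((y-s)^2+t^2) = t * Real.sqrt (1 + ((y-s)/t)^2) := by
      rw [← Real.sqrt_sq ht.le, ← Real.sqrt_mul (sq_nonneg t)]
      congr 1
      rw [Real.sqrt_sq ht.le]
      field_simp
      ring
    rw [Real.cos_sub, Real.cos_arctan, Real.sin_arctan, Real.cos_arctan, Real.sin_arctan, hx, hy]
    have h1 : Real.sqrt (1 + ((x-s)/t)^2) > 0 := Real.sqrt_pos.2 (by positivity)
    have h2 : Real.sqrt (1 + ((y-s)/t)^2) > 0 := Real.sqrt_pos.2 (by positivity)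
    field_simp
    ring
  rw [key, hcos, ← Real.cos_abs]
  apply Real.arccos_cos (abs_nonneg _)
  have h1 := Real.arctan_lt_pi_div_two ((y-s)/t)
  have h2 := Real.neg_pi_div_two_lt_arctan ((y-s)/t)
  have h3 := Real.arctan_lt_pi_div_two ((x-s)/t)
  have h4 := Real.neg_pi_div_two_lt_arctan ((x-s)/t)
  rw [abs_le]
  constructor <;> linarith

lemma tan_ineq (ω a : ℝ) (hω₀ : 0 < ω) (hω₁ : ω < π) (ha : -(π/2) < a) (hb : a + ω < π/2) :
    2 * tan (ω/2) ≤ tan (a + ω) - tan a := by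
  have hca : 0 < cos a := Real.cos_pos_of_mem_Ioo ⟨ha, by linarith⟩
  have hcb : 0 < cos (a + ω) := Real.cos_pos_of_mem_Ioo ⟨by linarith, hb⟩
  have hch : 0 < cos (ω/2) := Real.cos_pos_of_mem_Ioo ⟨by linarith, by linarith [Real.pi_pos]⟩
  have hsω : 0 < sin ω := Real.sin_pos_of_pos_of_lt_pi hω₀ hω₁
  have hs : sin ω = sin (a + ω) * cos a - cos (a + ω) * sin a := by
    rw [show ω = (a + ω) - a by ring, Real.sin_sub]
    ring_nf
  have h1 : tan (a + ω) - tan a = sin ω / (cos a * cos (a + ω)) := by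
    rw [Real.tan_eq_sin_div_cos, Real.tan_eq_sin_div_cos, hs]
    field_simp
  have h2 : 2 * tan (ω/2) = sin ω / cos (ω/2)^2 := by
    rw [Real.tan_eq_sin_div_cos, show ω = 2 * (ω/2) by ring, Real.sin_two_mul]
    field_simp
  rw [h1, h2]
  apply div_le_div_of_nonneg_left hsω.le (by positivity)
  have hp : 2 * (cos a * cos (a + ω)) = cos ω + cos (a + (a + ω)) := by
    have h3 := Real.cos_add a (a + ω)
    have h4 := Real.cos_sub a (a + ω)
    have h5 : a - (a + ω) = -ω := by ring
    rw [h5, Real.cos_neg] at h4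
    linarith
  have hsq : cos (ω/2)^2 = 1/2 + cos ω / 2 := by
    have := Real.cos_sq (ω/2)
    rw [show 2 * (ω/2) = ω by ring] at this
    exact this
  nlinarith [Real.cos_le_one (a + (a + ω))]

theorem isosceles_triangle_minimizes_area
    (ω s t b₁ c₁ b₁' c₁' : ℝ) (hω₀ : 0 < ω) (hω₁ : ω < π) (ht : 0 < t)
    (hbc : b₁ < c₁) (hbc' : b₁' < c₁')
    (hang : EuclideanGeometry.angle (pt b₁ 0) (pt s t) (pt c₁ 0) = ω)
    (hang' : EuclideanGeometry.angle (pt b₁' 0) (pt s t) (pt c₁' 0) = ω)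
    (hiso : ‖pt s t - pt b₁ 0‖ = ‖pt s t - pt c₁ 0‖) :
    c₁ - b₁ ≤ c₁' - b₁' ∧
    (1 / 2) * (c₁ - b₁) * t ≤ (1 / 2) * (c₁' - b₁') * t := by
  set A := arctan ((b₁-s)/t) with hA
  set B := arctan ((c₁-s)/t) with hB
  set A' := arctan ((b₁'-s)/t) with hA'
  set B' := arctan ((c₁'-s)/t) with hB'
  have hAB : A < B := Real.arctan_strictMono (div_lt_div_of_pos_right (by linarith) ht)
  have hAB' : A' < B' := Real.arctan_strictMono (div_lt_div_of_pos_right (by linarith) ht)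
  rw [angle_eq_abs_arctan_sub s t b₁ c₁ ht, ← hA, ← hB,
    abs_of_pos (by linarith)] at hang
  rw [angle_eq_abs_arctan_sub s t b₁' c₁' ht, ← hA', ← hB',
    abs_of_pos (by linarith)] at hang'
  -- bounds on arctans
  have hA'lb := Real.neg_pi_div_two_lt_arctan ((b₁'-s)/t)
  have hB'ub := Real.arctan_lt_pi_div_two ((c₁'-s)/t)
  -- isosceles: s is midpoint
  have hmid : b₁ - s = -(c₁ - s) := by
    have e2 : ‖pt s t - pt b₁ 0‖ = Real.sqrt ((b₁-s)^2+t^2) := by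
      rw [EuclideanSpace.norm_eq]
      simp [pt, Fin.sum_univ_two]
      ring_nf
    have e3 : ‖pt s t - pt c₁ 0‖ = Real.sqrt ((c₁-s)^2+t^2) := by
      rw [EuclideanSpace.norm_eq]
      simp [pt, Fin.sum_univ_two]
      ring_nf
    rw [e2, e3] at hiso
    have hsq : (b₁-s)^2+t^2 = (c₁-s)^2+t^2 := by
      have := congrArg (fun z => z^2) hiso
      simpa [Real.sq_sqrt, add_nonneg (sq_nonneg _) (sq_nonneg t)] using this
    nlinarith
  have hBval : B = ω/2 := by
    have : A = -B := by rw [hA, hB, hmid, neg_div, Real.arctan_neg]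
    rw [this] at hang
    linarith
  have htanB : Real.tan B = (c₁-s)/t := Real.tan_arctan _
  have htanA' : Real.tan A' = (b₁'-s)/t := Real.tan_arctan _
  have htanB' : Real.tan B' = (c₁'-s)/t := Real.tan_arctan _
  have hcb : c₁ - b₁ = 2 * t * Real.tan (ω/2) := by
    rw [← hBval, htanB]
    field_simp
    linear_combination (-1) * hmid
  have hkey : 2 * Real.tan (ω/2) ≤ Real.tan (A' + ω) - Real.tan A' := by
    apply tan_ineq ω A' hω₀ hω₁ (by linarith) (by linarith)
  rw [show A' + ω = B' by linarith] at hkey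
  have hcb' : c₁' - b₁' = t * (Real.tan B' - Real.tan A') := by
    rw [htanA', htanB']
    field_simp
    ring
  have h1 : c₁ - b₁ ≤ c₁' - b₁' := by
    rw [hcb, hcb']
    nlinarith
  exact ⟨h1, by nlinarith⟩
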